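/- Assume the ItI relations g₁ = R^α₁₁ t₁ + R^α₁₃ t₃^α + h₁^α, g₃^α = R^α₃₁ t₁ + R^α₃₃ t₃^α + h₃^α, g₂ = R^β₂₂ t₂ + R^β₂₃ t₃^β + h₂^β, g₃^β = R^β₃₂ t₂ + R^β₃₃ t₃^β + h₃^β, together with the interface coupling t₃^α = −g₃^β and t₃^β = −g₃^α, and that W := I − R^β₃₃ R^α₃₃ is invertible. Then the exterior outgoing impedance data of the merged box satisfies g₁ = (R^α₁₁ + R^α₁₃ W⁻¹ R^β₃₃ R^α₃₁) t₁ − R^α₁₃ W⁻¹ R^β₃₂ t₂ + h₁^α + R^α₁₃ W⁻¹ (R^β₃₃ h₃^α − h₃^β) and g₂ = −R^β₂₃ (R^α₃₁ + R^α₃₃ W⁻¹ R^β₃₃ R^α₃₁) t₁ + (R^β₂₂ + R^β₂₃ R^α₃₃ W⁻¹ R^β₃₂) t₂ + h₂^β − R^β₂₃ (I + R^α₃₃ W⁻¹ R^β₃₃) h₃^α + R^β₂₃ R^α₃₃ W⁻¹ h₃^β. -/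
import Mathlib


/-- ItI merge: the exterior outgoing impedance data of the merged box. -/
theorem iti_merge_outgoing {n₁ n₂ n₃ : ℕ}
    (Rα₁₁ : Matrix (Fin n₁) (Fin n₁) ℂ) (Rα₁₃ : Matrix (Fin n₁) (Fin n₃) ℂ)
    (Rα₃₁ : Matrix (Fin n₃) (Fin n₁) ℂ) (Rα₃₃ : Matrix (Fin n₃) (Fin n₃) ℂ)
    (Rβ₂₂ : Matrix (Fin n₂) (Fin n₂) ℂ) (Rβ₂₃ : Matrix (Fin n₂) (Fin n₃) ℂ)
    (Rβ₃₂ : Matrix (Fin n₃) (Fin n₂) ℂ) (Rβ₃₃ : Matrix (Fin n₃) (Fin n₃) ℂ)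
    (t₁ g₁ h₁α : Fin n₁ → ℂ) (t₂ g₂ h₂β : Fin n₂ → ℂ)
    (t₃α t₃β g₃α g₃β h₃α h₃β : Fin n₃ → ℂ)
    (hα₁ : g₁ = Rα₁₁.mulVec t₁ + Rα₁₃.mulVec t₃α + h₁α)
    (hα₃ : g₃α = Rα₃₁.mulVec t₁ + Rα₃₃.mulVec t₃α + h₃α)
    (hβ₂ : g₂ = Rβ₂₂.mulVec t₂ + Rβ₂₃.mulVec t₃β + h₂β)
    (hβ₃ : g₃β = Rβ₃₂.mulVec t₂ + Rβ₃₃.mulVec t₃β + h₃β)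
    (hcα : t₃α = -g₃β) (hcβ : t₃β = -g₃α)
    (hW : IsUnit (1 - Rβ₃₃ * Rα₃₃)) :
    g₁ = (Rα₁₁ + Rα₁₃ * (1 - Rβ₃₃ * Rα₃₃)⁻¹ * Rβ₃₃ * Rα₃₁).mulVec t₁ -
        (Rα₁₃ * (1 - Rβ₃₃ * Rα₃₃)⁻¹ * Rβ₃₂).mulVec t₂ + h₁α +
        (Rα₁₃ * (1 - Rβ₃₃ * Rα₃₃)⁻¹).mulVec (Rβ₃₃.mulVec h₃α - h₃β) ∧
    g₂ = -(Rβ₂₃ * (Rα₃₁ + Rα₃₃ * (1 - Rβ₃₃ * Rα₃₃)⁻¹ * Rβ₃₃ * Rα₃₁)).mulVec t₁ +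
        (Rβ₂₂ + Rβ₂₃ * Rα₃₃ * (1 - Rβ₃₃ * Rα₃₃)⁻¹ * Rβ₃₂).mulVec t₂ + h₂β -
        (Rβ₂₃ * (1 + Rα₃₃ * (1 - Rβ₃₃ * Rα₃₃)⁻¹ * Rβ₃₃)).mulVec h₃α +
        (Rβ₂₃ * Rα₃₃ * (1 - Rβ₃₃ * Rα₃₃)⁻¹).mulVec h₃β := by
  have hWinv : (1 - Rβ₃₃ * Rα₃₃)⁻¹ * (1 - Rβ₃₃ * Rα₃₃) = 1 :=
    Matrix.nonsing_inv_mul _ ((Matrix.isUnit_iff_isUnit_det _).mp hW)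
  have ht : (1 - Rβ₃₃ * Rα₃₃).mulVec t₃α =
      (Rβ₃₃ * Rα₃₁).mulVec t₁ - Rβ₃₂.mulVec t₂ + Rβ₃₃.mulVec h₃α - h₃β := by
    rw [Matrix.sub_mulVec, Matrix.one_mulVec]
    nth_rewrite 1 [hcα]
    rw [hβ₃, hcβ, hα₃]
    simp only [Matrix.mulVec_add, Matrix.mulVec_neg, neg_add_rev,
      ← Matrix.mulVec_mulVec]
    abel
  have key : t₃α = ((1 - Rβ₃₃ * Rα₃₃)⁻¹).mulVec
      ((Rβ₃₃ * Rα₃₁).mulVec t₁ - Rβ₃₂.mulVec t₂ + Rβ₃₃.mulVec h₃α - h₃β) := by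
    rw [← ht, Matrix.mulVec_mulVec, hWinv, Matrix.one_mulVec]
  constructor
  · rw [hα₁, key]
    simp only [Matrix.add_mulVec, Matrix.sub_mulVec, Matrix.mulVec_add,
      Matrix.mulVec_sub, Matrix.mulVec_neg, Matrix.neg_mulVec,
      ← Matrix.mulVec_mulVec, Matrix.one_mulVec]
    abel
  · rw [hβ₂, hcβ, hα₃, key]
    simp only [Matrix.add_mulVec, Matrix.sub_mulVec, Matrix.mulVec_add,
      Matrix.mulVec_sub, Matrix.mulVec_neg, Matrix.neg_mulVec,
      ← Matrix.mulVec_mulVec, Matrix.one_mulVec]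
    abel
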